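/- Let n ≥ 1, let k : Fin n → ℝ satisfy 0 < k p ≤ 1 for every p, let A_k be the multiplication operator on EuclideanSpace ℂ (Fin n) defined by (A_k x) p = (k p) · (x p), and let λ ≥ 0. Define the unsharp-mask filter f(x) = x + λ·(x - A_k x). Then for every x, ‖x - f(x)‖ ≤ λ·(1 - min_p k p)·‖x‖; consequently, if λ·(1 - min_p k p) < 1, then f satisfies the reverse-filtering contraction condition with constant t = λ·(1 - min_p k p) ∈ [0,1), and for any i* with J* = f(i*) the reverse-filtering iteration X⁰ = J*, X^{n+1} = Xⁿ + J* - f(Xⁿ) converges to i*. -/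

import Mathlib

/-- The multiplication (Fourier-multiplier) operator with multiplier `k`. -/
def mulOp (n : ℕ) (k : Fin n → ℂ) (x : EuclideanSpace ℂ (Fin n)) :
    EuclideanSpace ℂ (Fin n) :=
  WithLp.toLp 2 (fun p => k p * x p)

/-- The unsharp-mask filter `f x = x + λ·(x - A_k x)` built from a smoothing
multiplier `k` with values in `(0,1]` satisfies
`‖x - f x‖ ≤ λ·(1 - min_p k p)·‖x‖`; hence if `λ·(1 - min_p k p) < 1` it
satisfies the reverse-filtering contraction condition with that constant, and
the reverse-filtering iteration converges to the true input. -/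
theorem unsharp_mask_reverse_filtering
    (n : ℕ) (hn : 0 < n) (k : Fin n → ℝ)
    (hk : ∀ p : Fin n, 0 < k p ∧ k p ≤ 1)
    (lam : ℝ) (hlam : 0 ≤ lam)
    (f : EuclideanSpace ℂ (Fin n) → EuclideanSpace ℂ (Fin n))
    (hf : ∀ x, f x = x + lam • (x - mulOp n (fun p => (k p : ℂ)) x)) :
    (∀ x : EuclideanSpace ℂ (Fin n),
        ‖x - f x‖ ≤
          lam * (1 - Finset.univ.inf' (Finset.univ_nonempty_iff.mpr ⟨⟨0, hn⟩⟩) k) * ‖x‖) ∧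
      (lam * (1 - Finset.univ.inf' (Finset.univ_nonempty_iff.mpr ⟨⟨0, hn⟩⟩) k) < 1 →
        (0 ≤ lam * (1 - Finset.univ.inf' (Finset.univ_nonempty_iff.mpr ⟨⟨0, hn⟩⟩) k) ∧
          (∀ x y : EuclideanSpace ℂ (Fin n),
            ‖(x - f x) - (y - f y)‖ ≤
              lam * (1 - Finset.univ.inf' (Finset.univ_nonempty_iff.mpr ⟨⟨0, hn⟩⟩) k) *
                ‖x - y‖) ∧
          ∀ (istar Jstar : EuclideanSpace ℂ (Fin n)), Jstar = f istar →
            ∀ X : ℕ → EuclideanSpace ℂ (Fin n), X 0 = Jstar →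
              (∀ m : ℕ, X (m + 1) = X m + Jstar - f (X m)) →
                Filter.Tendsto X Filter.atTop (nhds istar))) := by
  set m := Finset.univ.inf' (Finset.univ_nonempty_iff.mpr ⟨⟨0, hn⟩⟩) k with hm
  set t := lam * (1 - m) with ht
  have hm_le : ∀ p, m ≤ k p := fun p => Finset.inf'_le _ (Finset.mem_univ p)
  have hm1 : m ≤ 1 := le_trans (hm_le ⟨0, hn⟩) (hk ⟨0, hn⟩).2
  have h1m : (0:ℝ) ≤ 1 - m := by linarith
  have ht0 : 0 ≤ t := mul_nonneg hlam h1m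
  -- main norm bound
  have hbound : ∀ x : EuclideanSpace ℂ (Fin n), ‖x - f x‖ ≤ t * ‖x‖ := by
    intro x
    have hxfx : x - f x = (-lam) • (x - mulOp n (fun p => (k p : ℂ)) x) := by
      rw [hf x]; module
    rw [hxfx, norm_smul]
    simp only [norm_neg, Real.norm_eq_abs, abs_of_nonneg hlam]
    rw [ht, mul_assoc]
    refine mul_le_mul_of_nonneg_left ?_ hlam
    -- ‖x - A x‖ ≤ (1 - m) * ‖x‖
    have key : ∀ p, ‖(x - mulOp n (fun p => (k p : ℂ)) x) p‖ ≤ (1 - m) * ‖x p‖ := by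
      intro p
      have h1 : (x - mulOp n (fun p => (k p : ℂ)) x) p = ((1 : ℂ) - (k p : ℂ)) * x p := by
        simp [mulOp]; ring
      rw [h1, norm_mul]
      have h2 : ‖(1 : ℂ) - (k p : ℂ)‖ = 1 - k p := by
        rw [show (1 : ℂ) - (k p : ℂ) = ((1 - k p : ℝ) : ℂ) by push_cast; ring,
          Complex.norm_real, Real.norm_eq_abs, abs_of_nonneg (by linarith [(hk p).2])]
      rw [h2]
      exact mul_le_mul_of_nonneg_right (by linarith [hm_le p]) (norm_nonneg _)
    calc ‖x - mulOp n (fun p => (k p : ℂ)) x‖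
        = Real.sqrt (∑ p, ‖(x - mulOp n (fun p => (k p : ℂ)) x) p‖ ^ 2) :=
          EuclideanSpace.norm_eq _
      _ ≤ Real.sqrt (∑ p, ((1 - m) * ‖x p‖) ^ 2) := by
          apply Real.sqrt_le_sqrt
          exact Finset.sum_le_sum fun p _ => pow_le_pow_left₀ (norm_nonneg _) (key p) 2
      _ = (1 - m) * Real.sqrt (∑ p, ‖x p‖ ^ 2) := by
          simp_rw [mul_pow, ← Finset.mul_sum]
          rw [Real.sqrt_mul (sq_nonneg _), Real.sqrt_sq h1m]
      _ = (1 - m) * ‖x‖ := by rw [EuclideanSpace.norm_eq]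
  refine ⟨hbound, fun htlt => ⟨ht0, ?_, ?_⟩⟩
  · -- contraction
    intro x y
    have hlin : (x - f x) - (y - f y) =
        (x - y) - f (x - y) := by
      rw [hf x, hf y, hf (x - y)]
      ext p
      simp [mulOp, PiLp.sub_apply, PiLp.add_apply, PiLp.smul_apply]
      ring
    rw [hlin]; exact hbound _
  · intro istar Jstar hJ X hX0 hXrec
    have hstep : ∀ q : ℕ, ‖X (q + 1) - istar‖ ≤ t * ‖X q - istar‖ := by
      intro q
      have h1 : X (q + 1) - istar = ((X q - istar) - f (X q - istar)) := by
        rw [hXrec q, hJ, hf (X q), hf istar, hf (X q - istar)]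
        ext p
        simp [mulOp, PiLp.sub_apply, PiLp.add_apply, PiLp.smul_apply]
        ring
      rw [h1]; exact hbound _
    have hgeo : ∀ q : ℕ, ‖X q - istar‖ ≤ t ^ q * ‖X 0 - istar‖ := by
      intro q
      induction q with
      | zero => simp
      | succ q ih =>
        calc ‖X (q + 1) - istar‖ ≤ t * ‖X q - istar‖ := hstep q
          _ ≤ t * (t ^ q * ‖X 0 - istar‖) := mul_le_mul_of_nonneg_left ih ht0
          _ = t ^ (q + 1) * ‖X 0 - istar‖ := by ring
    rw [tendsto_iff_norm_sub_tendsto_zero]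
    have hlim : Filter.Tendsto (fun q => t ^ q * ‖X 0 - istar‖) Filter.atTop (nhds 0) := by
      rw [show (0:ℝ) = 0 * ‖X 0 - istar‖ by ring]
      exact (tendsto_pow_atTop_nhds_zero_of_lt_one ht0 htlt).mul_const _
    exact squeeze_zero (fun q => norm_nonneg _) hgeo hlim
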